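/- Let H be a complex Hilbert space and A := K(H) the complex *-algebra of compact operators on H. Equip A × A with the coordinatewise *-algebra structure and with the flip map G : A × A → A × A, G(a, b) := (b, a) (the grading automorphism of the standard odd grading). Suppose τ : A × A → A × A is additive, conjugate-linear, multiplicative, star-preserving, bijective, satisfies τ ∘ τ = id, and commutes with the flip: τ ∘ G = G ∘ τ. Then there exists a Real structure σ on A such that either τ(a, b) = (σ a, σ b) for all (a, b) ∈ A × A (τ is even), or τ(a, b) = (σ b, σ a) for all (a, b) ∈ A × A (τ is odd). -/

import Mathlib

open ContinuousLinearMap in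
lemma aux_compact_zero {H : Type*} [NormedAddCommGroup H] [NormedSpace ℂ H] :
    IsCompactOperator (0 : H →L[ℂ] H) := by
  have := isCompactOperator_zero (M₁ := H) (M₂ := H)
  simpa using this

lemma aux_rankOne_compact {H : Type*} [NormedAddCommGroup H] [InnerProductSpace ℂ H] (x v : H) :
    IsCompactOperator ((innerSL ℂ x).smulRight v) := by
  have h1 : IsCompactOperator (innerSL ℂ x : H →L[ℂ] ℂ) := by
    refine ⟨Metric.closedBall 0 ‖x‖, isCompact_closedBall _ _, ?_⟩
    refine Filter.mem_of_superset (Metric.closedBall_mem_nhds (0:H) one_pos) ?_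
    intro u hu
    simp only [Set.mem_preimage, Metric.mem_closedBall, dist_zero_right] at *
    calc ‖(innerSL ℂ x) u‖ ≤ ‖x‖ * ‖u‖ := norm_inner_le_norm x u
      _ ≤ ‖x‖ * 1 := by gcongr
      _ = ‖x‖ := mul_one _
  have h2 : Continuous (fun c : ℂ => c • v) := continuous_id.smul continuous_const
  have h3 := h1.continuous_comp h2
  have he : ⇑((innerSL ℂ x).smulRight v) = (fun c : ℂ => c • v) ∘ ⇑(innerSL ℂ x) := rfl
  rw [IsCompactOperator] at h3 ⊢
  rw [he]
  exact h3

lemma aux_sep {H : Type*} [NormedAddCommGroup H] [InnerProductSpace ℂ H]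
    (S T : H →L[ℂ] H) (hS : S ≠ 0) (hT : T ≠ 0) :
    ∃ C : H →L[ℂ] H, IsCompactOperator C ∧ S.comp (C.comp T) ≠ 0 := by
  obtain ⟨v, hv⟩ : ∃ v, S v ≠ 0 := by
    by_contra h; push_neg at h
    exact hS (ContinuousLinearMap.ext fun u => by simpa using h u)
  obtain ⟨w, hw⟩ : ∃ w, T w ≠ 0 := by
    by_contra h; push_neg at h
    exact hT (ContinuousLinearMap.ext fun u => by simpa using h u)
  set x := T w with hx
  refine ⟨(inner ℂ x x : ℂ)⁻¹ • ((innerSL ℂ x).smulRight v), ?_, ?_⟩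
  · have := (aux_rankOne_compact x v).smul ((inner ℂ x x : ℂ)⁻¹)
    exact this
  · intro h0
    have hval : (S.comp (((inner ℂ x x : ℂ)⁻¹ • ((innerSL ℂ x).smulRight v)).comp T)) w = 0 := by
      rw [h0]; rfl
    simp only [ContinuousLinearMap.comp_apply, ContinuousLinearMap.smul_apply,
      ContinuousLinearMap.smulRight_apply, innerSL_apply_apply, ← hx] at hval
    rw [smul_smul, inv_mul_cancel₀ ((inner_self_ne_zero (𝕜 := ℂ)).mpr hw), one_smul] at hval
    exact hv hval



/-- The `*`-algebra `A = K(H)` of compact operators on `H`, realized as the subtype of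
continuous linear maps `H →L[ℂ] H` that are compact operators. -/
abbrev CompactOp (H : Type*) [NormedAddCommGroup H] [NormedSpace ℂ H] : Type _ :=
  {T : H →L[ℂ] H // IsCompactOperator T}

/-- Let `A = K(H)` and equip `A × A` with the coordinatewise
`*`-algebra structure and the flip (the grading automorphism of the standard odd
grading).  Any Real structure `τ` on `A × A` commuting with the flip is either even,
`τ(a, b) = (σ a, σ b)`, or odd, `τ(a, b) = (σ b, σ a)`, for a Real structure `σ`
on `A`. -/
theorem stmt_12 {H : Type*} [NormedAddCommGroup H] [InnerProductSpace ℂ H] [CompleteSpace H]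
    (τ : CompactOp H × CompactOp H → CompactOp H × CompactOp H)
    (hbij : Function.Bijective τ)
    (haddτ : ∀ (p q : CompactOp H × CompactOp H)
      (h1 : IsCompactOperator (p.1.1 + q.1.1)) (h2 : IsCompactOperator (p.2.1 + q.2.1)),
      (τ (⟨p.1.1 + q.1.1, h1⟩, ⟨p.2.1 + q.2.1, h2⟩)).1.1 = (τ p).1.1 + (τ q).1.1 ∧
      (τ (⟨p.1.1 + q.1.1, h1⟩, ⟨p.2.1 + q.2.1, h2⟩)).2.1 = (τ p).2.1 + (τ q).2.1)
    (hsmulτ : ∀ (c : ℂ) (p : CompactOp H × CompactOp H)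
      (h1 : IsCompactOperator (c • p.1.1)) (h2 : IsCompactOperator (c • p.2.1)),
      (τ (⟨c • p.1.1, h1⟩, ⟨c • p.2.1, h2⟩)).1.1 = (starRingEnd ℂ c) • (τ p).1.1 ∧
      (τ (⟨c • p.1.1, h1⟩, ⟨c • p.2.1, h2⟩)).2.1 = (starRingEnd ℂ c) • (τ p).2.1)
    (hmulτ : ∀ (p q : CompactOp H × CompactOp H)
      (h1 : IsCompactOperator (p.1.1.comp q.1.1)) (h2 : IsCompactOperator (p.2.1.comp q.2.1)),
      (τ (⟨p.1.1.comp q.1.1, h1⟩, ⟨p.2.1.comp q.2.1, h2⟩)).1.1 = (τ p).1.1.comp (τ q).1.1 ∧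
      (τ (⟨p.1.1.comp q.1.1, h1⟩, ⟨p.2.1.comp q.2.1, h2⟩)).2.1 = (τ p).2.1.comp (τ q).2.1)
    (hstarτ : ∀ (p : CompactOp H × CompactOp H)
      (h1 : IsCompactOperator (ContinuousLinearMap.adjoint p.1.1))
      (h2 : IsCompactOperator (ContinuousLinearMap.adjoint p.2.1)),
      (τ (⟨ContinuousLinearMap.adjoint p.1.1, h1⟩,
          ⟨ContinuousLinearMap.adjoint p.2.1, h2⟩)).1.1 =
        ContinuousLinearMap.adjoint (τ p).1.1 ∧
      (τ (⟨ContinuousLinearMap.adjoint p.1.1, h1⟩,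
          ⟨ContinuousLinearMap.adjoint p.2.1, h2⟩)).2.1 =
        ContinuousLinearMap.adjoint (τ p).2.1)
    (hinvol : ∀ p : CompactOp H × CompactOp H, τ (τ p) = p)
    (hflip : ∀ p : CompactOp H × CompactOp H, τ (p.2, p.1) = ((τ p).2, (τ p).1)) :
    ∃ σ : CompactOp H → CompactOp H,
      Function.Bijective σ ∧
      (∀ (T S : CompactOp H) (h : IsCompactOperator (T.1 + S.1)),
        (σ ⟨T.1 + S.1, h⟩).1 = (σ T).1 + (σ S).1) ∧
      (∀ (c : ℂ) (T : CompactOp H) (h : IsCompactOperator (c • T.1)),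
        (σ ⟨c • T.1, h⟩).1 = (starRingEnd ℂ c) • (σ T).1) ∧
      (∀ (T S : CompactOp H) (h : IsCompactOperator (T.1.comp S.1)),
        (σ ⟨T.1.comp S.1, h⟩).1 = (σ T).1.comp (σ S).1) ∧
      (∀ (T : CompactOp H) (h : IsCompactOperator (ContinuousLinearMap.adjoint T.1)),
        (σ ⟨ContinuousLinearMap.adjoint T.1, h⟩).1 = ContinuousLinearMap.adjoint (σ T).1) ∧
      (∀ T : CompactOp H, σ (σ T) = T) ∧
      ((∀ p : CompactOp H × CompactOp H, τ p = (σ p.1, σ p.2)) ∨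
       (∀ p : CompactOp H × CompactOp H, τ p = (σ p.2, σ p.1))) := by
    classical
  have hc0 : IsCompactOperator (0 : H →L[ℂ] H) := aux_compact_zero
  set z : CompactOp H := ⟨0, hc0⟩ with hzdef
  have hz1 : z.1 = (0 : H →L[ℂ] H) := rfl
  -- τ (z, z) = (z, z)
  have hτzz : τ (z, z) = (z, z) := by
    have h0 : IsCompactOperator ((z, z).1.1 + ((z, z) : CompactOp H × CompactOp H).1.1) := by
      show IsCompactOperator ⇑((0 : H →L[ℂ] H) + 0); rw [add_zero]; exact hc0
    have key := haddτ (z, z) (z, z) h0 h0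
    have e : ((⟨(z, z).1.1 + ((z, z) : CompactOp H × CompactOp H).1.1, h0⟩ : CompactOp H),
        (⟨(z, z).2.1 + ((z, z) : CompactOp H × CompactOp H).2.1, h0⟩ : CompactOp H)) = (z, z) := by
      refine Prod.ext (Subtype.ext ?_) (Subtype.ext ?_) <;> simp [hz1]
    rw [e] at key
    have e1 : (τ (z, z)).1.1 = 0 := by
      have h := key.1; rwa [left_eq_add] at h
    have e2 : (τ (z, z)).2.1 = 0 := by
      have h := key.2; rwa [left_eq_add] at h
    exact Prod.ext (Subtype.ext e1) (Subtype.ext e2)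
  set f : CompactOp H → CompactOp H := fun a => (τ (a, z)).1 with hfdef
  set g : CompactOp H → CompactOp H := fun a => (τ (a, z)).2 with hgdef
  have hτz : ∀ a : CompactOp H, τ (a, z) = (f a, g a) := fun a => rfl
  have hτzb : ∀ b : CompactOp H, τ (z, b) = (g b, f b) := fun b => hflip (b, z)
  -- f x ∘ g b = 0
  have hfg0 : ∀ a b : CompactOp H, (f a).1.comp ((g b).1) = 0 := by
    intro a b
    have h1 : IsCompactOperator ((a, z).1.1.comp (((z, b) : CompactOp H × CompactOp H)).1.1) := by
      rw [show (a, z).1.1.comp (((z, b) : CompactOp H × CompactOp H)).1.1 = 0 from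
        ContinuousLinearMap.comp_zero _]
      exact hc0
    have h2 : IsCompactOperator ((a, z).2.1.comp (((z, b) : CompactOp H × CompactOp H)).2.1) := by
      rw [show (a, z).2.1.comp (((z, b) : CompactOp H × CompactOp H)).2.1 = 0 from
        ContinuousLinearMap.zero_comp _]
      exact hc0
    have key := hmulτ (a, z) (z, b) h1 h2
    have e : ((⟨(a, z).1.1.comp (((z, b) : CompactOp H × CompactOp H)).1.1, h1⟩ : CompactOp H),
        (⟨(a, z).2.1.comp (((z, b) : CompactOp H × CompactOp H)).2.1, h2⟩ : CompactOp H))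
        = (z, z) := by
      refine Prod.ext (Subtype.ext ?_) (Subtype.ext ?_) <;> simp [hz1]
    rw [e, hτzz, hτzb b] at key
    have h3 := key.1
    rw [hz1] at h3
    exact h3.symm
  -- f absorbs right multiplication by compacts
  have habsorbf : ∀ (a C : CompactOp H), ∃ x : CompactOp H, (f x).1 = (f a).1.comp C.1 := by
    intro a C
    obtain ⟨p, hp⟩ := hbij.2 (C, z)
    have h1 : IsCompactOperator ((a, z).1.1.comp p.1.1) :=
      (a.2.comp_clm p.1.1 : IsCompactOperator (⇑a.1 ∘ ⇑p.1.1))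
    have h2 : IsCompactOperator ((a, z).2.1.comp p.2.1) := by
      rw [show (a, z).2.1.comp p.2.1 = 0 from ContinuousLinearMap.zero_comp _]
      exact hc0
    have key := hmulτ (a, z) p h1 h2
    have e : ((⟨(a, z).1.1.comp p.1.1, h1⟩ : CompactOp H),
        (⟨(a, z).2.1.comp p.2.1, h2⟩ : CompactOp H))
        = ((⟨a.1.comp p.1.1, h1⟩ : CompactOp H), z) := by
      refine Prod.ext rfl (Subtype.ext ?_); simp [hz1]
    rw [e, hp] at key
    exact ⟨⟨a.1.comp p.1.1, h1⟩, key.1⟩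
  -- the key dichotomy pointwise
  have hkey : ∀ a b : CompactOp H, (f a).1 = 0 ∨ (g b).1 = 0 := by
    intro a b
    by_contra hcon
    push_neg at hcon
    obtain ⟨C₀, hC₀c, hC₀⟩ := aux_sep (f a).1 (g b).1 hcon.1 hcon.2
    obtain ⟨x, hx⟩ := habsorbf a ⟨C₀, hC₀c⟩
    apply hC₀
    have h := hfg0 x b
    rw [hx, ContinuousLinearMap.comp_assoc] at h
    exact h
  -- full decomposition of τ
  have hτfull : ∀ p : CompactOp H × CompactOp H,
      (τ p).1.1 = (f p.1).1 + (g p.2).1 ∧ (τ p).2.1 = (g p.1).1 + (f p.2).1 := by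
    intro p
    have h1 : IsCompactOperator ((p.1, z).1.1 + (((z, p.2)) : CompactOp H × CompactOp H).1.1) := by
      rw [show (p.1, z).1.1 + (((z, p.2)) : CompactOp H × CompactOp H).1.1 = p.1.1 from
        add_zero _]
      exact p.1.2
    have h2 : IsCompactOperator ((p.1, z).2.1 + (((z, p.2)) : CompactOp H × CompactOp H).2.1) := by
      rw [show (p.1, z).2.1 + (((z, p.2)) : CompactOp H × CompactOp H).2.1 = p.2.1 from
        zero_add _]
      exact p.2.2
    have key := haddτ (p.1, z) (z, p.2) h1 h2
    have e : ((⟨(p.1, z).1.1 + (((z, p.2)) : CompactOp H × CompactOp H).1.1, h1⟩ : CompactOp H),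
        (⟨(p.1, z).2.1 + (((z, p.2)) : CompactOp H × CompactOp H).2.1, h2⟩ : CompactOp H)) = p := by
      refine Prod.ext (Subtype.ext ?_) (Subtype.ext ?_) <;> simp [hz1]
    rw [e, hτzb p.2] at key
    exact key
  -- structural lemmas valid for both coordinates
  have hadd2 : ∀ (T S : CompactOp H) (h : IsCompactOperator (T.1 + S.1)),
      (f ⟨T.1 + S.1, h⟩).1 = (f T).1 + (f S).1 ∧ (g ⟨T.1 + S.1, h⟩).1 = (g T).1 + (g S).1 := by
    intro T S h
    have h2 : IsCompactOperator ((T, z).2.1 + (((S, z)) : CompactOp H × CompactOp H).2.1) := by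
      rw [show (T, z).2.1 + (((S, z)) : CompactOp H × CompactOp H).2.1 = 0 from add_zero _]
      exact hc0
    have key := haddτ (T, z) (S, z) h h2
    have e : ((⟨(T, z).1.1 + (((S, z)) : CompactOp H × CompactOp H).1.1, h⟩ : CompactOp H),
        (⟨(T, z).2.1 + (((S, z)) : CompactOp H × CompactOp H).2.1, h2⟩ : CompactOp H))
        = ((⟨T.1 + S.1, h⟩ : CompactOp H), z) := by
      refine Prod.ext rfl (Subtype.ext ?_); simp [hz1]
    rw [e] at key
    exact key
  have hsmul2 : ∀ (c : ℂ) (T : CompactOp H) (h : IsCompactOperator (c • T.1)),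
      (f ⟨c • T.1, h⟩).1 = (starRingEnd ℂ c) • (f T).1 ∧
      (g ⟨c • T.1, h⟩).1 = (starRingEnd ℂ c) • (g T).1 := by
    intro c T h
    have h2 : IsCompactOperator (c • ((T, z) : CompactOp H × CompactOp H).2.1) := by
      rw [show c • ((T, z) : CompactOp H × CompactOp H).2.1 = 0 from smul_zero _]
      exact hc0
    have key := hsmulτ c (T, z) h h2
    have e : ((⟨c • ((T, z) : CompactOp H × CompactOp H).1.1, h⟩ : CompactOp H),
        (⟨c • ((T, z) : CompactOp H × CompactOp H).2.1, h2⟩ : CompactOp H))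
        = ((⟨c • T.1, h⟩ : CompactOp H), z) := by
      refine Prod.ext rfl (Subtype.ext ?_); simp [hz1]
    rw [e] at key
    exact key
  have hmul2 : ∀ (T S : CompactOp H) (h : IsCompactOperator (T.1.comp S.1)),
      (f ⟨T.1.comp S.1, h⟩).1 = (f T).1.comp (f S).1 ∧
      (g ⟨T.1.comp S.1, h⟩).1 = (g T).1.comp (g S).1 := by
    intro T S h
    have h2 : IsCompactOperator ((T, z).2.1.comp (((S, z)) : CompactOp H × CompactOp H).2.1) := by
      rw [show (T, z).2.1.comp (((S, z)) : CompactOp H × CompactOp H).2.1 = 0 from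
        ContinuousLinearMap.zero_comp _]
      exact hc0
    have key := hmulτ (T, z) (S, z) h h2
    have e : ((⟨(T, z).1.1.comp (((S, z)) : CompactOp H × CompactOp H).1.1, h⟩ : CompactOp H),
        (⟨(T, z).2.1.comp (((S, z)) : CompactOp H × CompactOp H).2.1, h2⟩ : CompactOp H))
        = ((⟨T.1.comp S.1, h⟩ : CompactOp H), z) := by
      refine Prod.ext rfl (Subtype.ext ?_); simp [hz1]
    rw [e] at key
    exact key
  have hstar2 : ∀ (T : CompactOp H) (h : IsCompactOperator (ContinuousLinearMap.adjoint T.1)),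
      (f ⟨ContinuousLinearMap.adjoint T.1, h⟩).1 = ContinuousLinearMap.adjoint (f T).1 ∧
      (g ⟨ContinuousLinearMap.adjoint T.1, h⟩).1 = ContinuousLinearMap.adjoint (g T).1 := by
    intro T h
    have hz2 : ContinuousLinearMap.adjoint (((T, z) : CompactOp H × CompactOp H).2.1) = 0 := by
      rw [hz1]; exact map_zero _
    have h2 : IsCompactOperator
        (ContinuousLinearMap.adjoint (((T, z) : CompactOp H × CompactOp H).2.1)) := by
      rw [hz2]; exact hc0
    have key := hstarτ (T, z) h h2
    have e : ((⟨ContinuousLinearMap.adjoint ((T, z) : CompactOp H × CompactOp H).1.1, h⟩ :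
          CompactOp H),
        (⟨ContinuousLinearMap.adjoint ((T, z) : CompactOp H × CompactOp H).2.1, h2⟩ :
          CompactOp H))
        = ((⟨ContinuousLinearMap.adjoint T.1, h⟩ : CompactOp H), z) := by
      refine Prod.ext rfl (Subtype.ext ?_); simp [hz1, hz2]
    rw [e] at key
    exact key
  -- dichotomy
  by_cases hall : ∀ a : CompactOp H, f a = z
  · -- odd case : σ := g
    have hσinv : ∀ T : CompactOp H, g (g T) = T := by
      intro T
      have h := hinvol (T, z)
      rw [hτz T, hall T] at h
      rw [hτzb (g T)] at h
      have := congrArg Prod.fst h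
      simpa using this
    refine ⟨g, (Function.Involutive.bijective hσinv), fun T S h => (hadd2 T S h).2,
      fun c T h => (hsmul2 c T h).2, fun T S h => (hmul2 T S h).2,
      fun T h => (hstar2 T h).2, hσinv, Or.inr ?_⟩
    intro p
    obtain ⟨e1, e2⟩ := hτfull p
    refine Prod.ext (Subtype.ext ?_) (Subtype.ext ?_)
    · rw [e1, show (f p.1).1 = 0 from congrArg Subtype.val (hall p.1), zero_add]
    · rw [e2, show (f p.2).1 = 0 from congrArg Subtype.val (hall p.2), add_zero]
  · -- even case : σ := f
    push_neg at hall
    obtain ⟨a0, ha0⟩ := hall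
    have hgall : ∀ b : CompactOp H, g b = z := by
      intro b
      rcases hkey a0 b with h | h
      · exact absurd (Subtype.ext h) ha0
      · exact Subtype.ext h
    have hσinv : ∀ T : CompactOp H, f (f T) = T := by
      intro T
      have h := hinvol (T, z)
      rw [hτz T, hgall T] at h
      rw [hτz (f T)] at h
      have := congrArg Prod.fst h
      simpa using this
    refine ⟨f, (Function.Involutive.bijective hσinv), fun T S h => (hadd2 T S h).1,
      fun c T h => (hsmul2 c T h).1, fun T S h => (hmul2 T S h).1,
      fun T h => (hstar2 T h).1, hσinv, Or.inl ?_⟩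
    intro p
    obtain ⟨e1, e2⟩ := hτfull p
    refine Prod.ext (Subtype.ext ?_) (Subtype.ext ?_)
    · rw [e1, show (g p.2).1 = 0 from congrArg Subtype.val (hgall p.2), add_zero]
    · rw [e2, show (g p.1).1 = 0 from congrArg Subtype.val (hgall p.1), zero_add]
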